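/- Let ν be the unique positive solution of ν(1 + (1 + 1/ν)e^{-1/ν}) = 2 and fix a constant ε ∈ (0, ν). Let Z_1, ..., Z_n be independent random variables, each uniformly distributed on a set M of m elements with m ≤ (ν − ε)n, and let T = |{j ∈ M : |{i : Z_i = j}| > 1}|. Then Pr[T ≤ 2(m − n)] = O(1/n); that is, there exist constants C > 0 and N_0 (depending only on ε) such that Pr[T ≤ 2(m − n)] ≤ C/n for all n ≥ N_0. -/

import Mathlib

open MeasureTheory ProbabilityTheory

/-- The number of elements of `Fin m` taken as value by more than one of the coordinates
of `z`. -/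
def repeatCount {n m : ℕ} (z : Fin n → Fin m) : ℕ :=
  (Finset.univ.filter (fun j : Fin m =>
    1 < (Finset.univ.filter (fun i : Fin n => z i = j)).card)).card

section Aux
open Finset


variable {n m : ℕ}

/-- count of indices hitting value j -/
def cnt (j : Fin m) (z : Fin n → Fin m) : ℕ := (Finset.univ.filter (fun i => z i = j)).card

lemma card_pattern (t : Fin n → Finset (Fin m)) :
    (univ.filter (fun z : Fin n → Fin m => ∀ i, z i ∈ t i)).card = ∏ i, (t i).card := by
  rw [← Fintype.card_piFinset]
  congr 1
  ext z
  simp [Fintype.mem_piFinset]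

lemma card_fiber (j : Fin m) (A : Finset (Fin n)) :
    (univ.filter (fun z : Fin n → Fin m =>
      univ.filter (fun i => z i = j) = A)).card = (m - 1) ^ (n - A.card) := by
  have h : (univ.filter (fun z : Fin n → Fin m => univ.filter (fun i => z i = j) = A))
      = univ.filter (fun z : Fin n → Fin m =>
          ∀ i, z i ∈ (if i ∈ A then ({j} : Finset (Fin m)) else {j}ᶜ)) := by
    ext z
    simp only [mem_filter, mem_univ, true_and]
    constructor
    · rintro rfl i
      by_cases hi : i ∈ univ.filter (fun i => z i = j) <;>
        simp only [mem_filter, mem_univ, true_and] at hi <;> simp [hi]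
    · intro h
      ext i
      have := h i
      by_cases hi : i ∈ A <;> simp [hi] at this <;> simp [hi, this]
  rw [h, card_pattern]
  rw [← Finset.prod_mul_prod_compl A]
  have h1 : ∀ i ∈ A, (if i ∈ A then ({j} : Finset (Fin m)) else {j}ᶜ).card = 1 := by
    intro i hi; simp [hi]
  have h2 : ∀ i ∈ Aᶜ, (if i ∈ A then ({j} : Finset (Fin m)) else {j}ᶜ).card = m - 1 := by
    intro i hi; simp only [mem_compl] at hi; simp [hi, Finset.card_compl]
  rw [Finset.prod_congr rfl h1, Finset.prod_congr rfl h2, Finset.prod_const_one,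
    Finset.prod_const, one_mul, Finset.card_compl, Fintype.card_fin]

lemma card_fiber2 (j k : Fin m) (hjk : j ≠ k) (A B : Finset (Fin n)) :
    (univ.filter (fun z : Fin n → Fin m =>
      univ.filter (fun i => z i = j) = A ∧ univ.filter (fun i => z i = k) = B)).card
      ≤ (m - 2) ^ (n - A.card - B.card) := by
  by_cases hd : Disjoint A B
  · have hsub : (univ.filter (fun z : Fin n → Fin m =>
        univ.filter (fun i => z i = j) = A ∧ univ.filter (fun i => z i = k) = B))
        ⊆ univ.filter (fun z : Fin n → Fin m =>
          ∀ i, z i ∈ (if i ∈ A then ({j} : Finset (Fin m)) else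
            if i ∈ B then {k} else ({j, k} : Finset (Fin m))ᶜ)) := by
      intro z hz
      simp only [mem_filter, mem_univ, true_and] at hz ⊢
      obtain ⟨hA, hB⟩ := hz
      intro i
      by_cases hiA : i ∈ A
      · have : z i = j := by
          rw [← hA] at hiA; simpa using hiA
        simp [hiA, this]
      · by_cases hiB : i ∈ B
        · have : z i = k := by
            rw [← hB] at hiB; simpa using hiB
          simp [hiA, hiB, this]
        · have h1 : z i ≠ j := by
            intro h; exact hiA (by rw [← hA]; simpa using h)
          have h2 : z i ≠ k := by
            intro h; exact hiB (by rw [← hB]; simpa using h)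
          simp [hiA, hiB, h1, h2]
    refine (Finset.card_le_card hsub).trans ?_
    rw [card_pattern]
    rw [← Finset.prod_mul_prod_compl (A ∪ B)]
    have h1 : ∀ i ∈ A ∪ B, (if i ∈ A then ({j} : Finset (Fin m)) else
        if i ∈ B then {k} else ({j, k} : Finset (Fin m))ᶜ).card = 1 := by
      intro i hi
      by_cases hiA : i ∈ A
      · simp [hiA]
      · have hiB : i ∈ B := by
          rcases Finset.mem_union.1 hi with h | h
          · exact absurd h hiA
          · exact h
        simp [hiA, hiB]
    have h2 : ∀ i ∈ (A ∪ B)ᶜ, (if i ∈ A then ({j} : Finset (Fin m)) else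
        if i ∈ B then {k} else ({j, k} : Finset (Fin m))ᶜ).card = m - 2 := by
      intro i hi
      simp only [mem_compl, Finset.mem_union, not_or] at hi
      rw [if_neg hi.1, if_neg hi.2, Finset.card_compl, Fintype.card_fin,
        Finset.card_pair hjk]
    rw [Finset.prod_congr rfl h1, Finset.prod_congr rfl h2, Finset.prod_const_one,
      Finset.prod_const, one_mul, Finset.card_compl, Fintype.card_fin,
      Finset.card_union_of_disjoint hd, Nat.sub_add_eq]
  · have : (univ.filter (fun z : Fin n → Fin m =>
        univ.filter (fun i => z i = j) = A ∧ univ.filter (fun i => z i = k) = B)) = ∅ := by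
      rw [Finset.eq_empty_iff_forall_notMem]
      intro z hz
      simp only [mem_filter, mem_univ, true_and] at hz
      apply hd
      rw [Finset.disjoint_left]
      intro i hiA hiB
      rw [← hz.1] at hiA
      rw [← hz.2] at hiB
      simp only [mem_filter, mem_univ, true_and] at hiA hiB
      exact hjk (hiA ▸ hiB)
    simp [this]

/-- the finset of subsets of `Fin n` of size at most 1 -/
noncomputable def small (n : ℕ) : Finset (Finset (Fin n)) :=
  (univ : Finset (Fin n)).powerset.filter (fun A => A.card ≤ 1)

lemma sum_small (h : ℕ → ℕ) : ∑ A ∈ small n, h A.card = h 0 + n * h 1 := by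
  rw [small]
  have : (univ : Finset (Fin n)).powerset.filter (fun A => A.card ≤ 1)
      = Finset.powersetCard 0 (univ : Finset (Fin n)) ∪ Finset.powersetCard 1 univ := by
    ext A
    simp only [Finset.mem_filter, Finset.mem_powerset, Finset.mem_union,
      Finset.mem_powersetCard]
    constructor
    · rintro ⟨hs, hc⟩
      rcases Nat.le_one_iff_eq_zero_or_eq_one.1 hc with h | h
      · exact Or.inl ⟨hs, h⟩
      · exact Or.inr ⟨hs, h⟩
    · rintro (⟨hs, hc⟩ | ⟨hs, hc⟩) <;> simp [hs, hc]
  rw [this, Finset.sum_union]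
  · have e0 : ∑ A ∈ Finset.powersetCard 0 (univ : Finset (Fin n)), h A.card
        = h 0 := by
      rw [Finset.sum_congr rfl (fun A hA => by
        rw [(Finset.mem_powersetCard.1 hA).2]), Finset.sum_const,
        Finset.card_powersetCard, Nat.choose_zero_right, one_smul]
    have e1 : ∑ A ∈ Finset.powersetCard 1 (univ : Finset (Fin n)), h A.card
        = n * h 1 := by
      rw [Finset.sum_congr rfl (fun A hA => by
        rw [(Finset.mem_powersetCard.1 hA).2]), Finset.sum_const,
        Finset.card_powersetCard, Nat.choose_one_right, Finset.card_univ,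
        Fintype.card_fin, smul_eq_mul]
    rw [e0, e1]
  · rw [Finset.disjoint_left]
    intro A h0 h1
    rw [Finset.mem_powersetCard] at h0 h1
    omega

lemma card_S1 (j : Fin m) :
    (univ.filter (fun z : Fin n → Fin m => cnt j z ≤ 1)).card
      = (m - 1) ^ n + n * (m - 1) ^ (n - 1) := by
  classical
  rw [Finset.card_eq_sum_card_fiberwise (f := fun z : Fin n → Fin m =>
    univ.filter (fun i => z i = j)) (t := small n) (fun z hz => by
      simp only [Finset.mem_coe, mem_filter, mem_univ, true_and] at hz ⊢
      simp only [small, Finset.mem_filter, Finset.mem_powerset]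
      exact ⟨Finset.subset_univ _, hz⟩)]
  have : ∀ A ∈ small n,
      ((univ.filter (fun z : Fin n → Fin m => cnt j z ≤ 1)).filter
        (fun z => univ.filter (fun i => z i = j) = A)).card
      = (m - 1) ^ (n - A.card) := by
    intro A hA
    rw [← card_fiber j A]
    congr 1
    ext z
    simp only [Finset.mem_filter, mem_univ, true_and, cnt]
    constructor
    · rintro ⟨_, h⟩; exact h
    · rintro rfl
      refine ⟨?_, rfl⟩
      simp only [small, Finset.mem_filter] at hA
      exact Finset.mem_filter.2 ⟨mem_univ _, hA.2⟩
  rw [Finset.sum_congr rfl this, sum_small (fun a => (m-1)^(n-a))]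
  simp

lemma card_S2 (j k : Fin m) (hjk : j ≠ k) :
    (univ.filter (fun z : Fin n → Fin m => cnt j z ≤ 1 ∧ cnt k z ≤ 1)).card
      ≤ (m - 2) ^ n + n * (m - 2) ^ (n - 1)
        + n * ((m - 2) ^ (n - 1) + n * (m - 2) ^ (n - 1 - 1)) := by
  classical
  rw [Finset.card_eq_sum_card_fiberwise (f := fun z : Fin n → Fin m =>
    (univ.filter (fun i => z i = j), univ.filter (fun i => z i = k)))
    (t := small n ×ˢ small n) (fun z hz => by
      simp only [Finset.mem_coe, mem_filter, mem_univ, true_and] at hz ⊢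
      simp only [Finset.mem_product, small, Finset.mem_filter, Finset.mem_powerset]
      exact ⟨⟨Finset.subset_univ _, hz.1⟩, ⟨Finset.subset_univ _, hz.2⟩⟩)]
  have hle : ∀ p ∈ small n ×ˢ small n,
      ((univ.filter (fun z : Fin n → Fin m => cnt j z ≤ 1 ∧ cnt k z ≤ 1)).filter
        (fun z => (univ.filter (fun i => z i = j), univ.filter (fun i => z i = k)) = p)).card
      ≤ (m - 2) ^ (n - p.1.card - p.2.card) := by
    intro p _
    refine le_trans (Finset.card_le_card ?_) (card_fiber2 j k hjk p.1 p.2)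
    intro z hz
    simp only [Finset.mem_filter, mem_univ, true_and, Prod.ext_iff] at hz ⊢
    exact hz.2
  refine le_trans (Finset.sum_le_sum hle) ?_
  rw [Finset.sum_product]
  have inner : ∀ A : Finset (Fin n), ∑ B ∈ small n, (m - 2) ^ (n - A.card - B.card)
      = (m-2)^(n - A.card) + n * (m-2)^(n - A.card - 1) :=
    fun A => sum_small (fun b => (m-2)^(n - A.card - b))
  rw [Finset.sum_congr rfl (fun A _ => inner A),
    sum_small (fun a => (m-2)^(n-a) + n * (m-2)^(n - a - 1))]
  simp

lemma U_add_repeat {n m : ℕ} (z : Fin n → Fin m) :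
    (univ.filter (fun j : Fin m => cnt j z ≤ 1)).card + repeatCount z = m := by
  have := Finset.card_filter_add_card_filter_not
    (s := (univ : Finset (Fin m))) (p := fun j => cnt j z ≤ 1)
  rw [Finset.card_univ, Fintype.card_fin] at this
  have h2 : repeatCount z = (univ.filter (fun a : Fin m => ¬ cnt a z ≤ 1)).card := by
    unfold repeatCount
    congr 1
    ext j
    simp [cnt, Nat.lt_iff_add_one_le, Nat.not_le]
  rw [h2]
  exact this

set_option maxHeartbeats 2000000 in
lemma main_count (ν ε : ℝ) (hν : 0 < ν)
    (hkey : ν + (ν + 1) * Real.exp (-1/ν) = 2)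
    (hε0 : 0 < ε) (n m : ℕ) (hn2 : 2 ≤ n) (hnm : n ≤ m)
    (hm : (m : ℝ) ≤ (ν - ε) * n) (hεn : 4 ≤ ε * n) :
    ((univ.filter (fun z : Fin n → Fin m =>
      (repeatCount z : ℤ) ≤ 2 * ((m:ℤ) - (n:ℤ)))).card : ℝ)
      ≤ 28 / ε^2 / n * (m:ℝ)^n := by
  classical
  obtain ⟨e, rfl⟩ : ∃ e, n = e + 2 := ⟨n - 2, by omega⟩
  set n := e + 2 with hn
  -- real abbreviations
  set M : ℝ := (m : ℝ) with hMdef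
  have hM2 : (2:ℝ) ≤ M := by
    have : (2:ℕ) ≤ m := le_trans hn2 hnm
    rw [hMdef]; exact_mod_cast this
  have hM0 : (0:ℝ) < M := by linarith
  have hnR : (2:ℝ) ≤ (n:ℝ) := by exact_mod_cast hn2
  have hnR0 : (0:ℝ) < (n:ℝ) := by linarith
  have hnM : (n:ℝ) ≤ M := by rw [hMdef]; exact_mod_cast hnm
  set p : ℝ := 1 / M with hpdef
  set q : ℝ := 1 - p with hqdef
  set r : ℝ := 1 - 2 * p with hrdef
  have hp0 : 0 < p := by positivity
  have hphalf : p ≤ 1/2 := by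
    rw [hpdef]; rw [div_le_div_iff₀ hM0 (by norm_num)]; linarith
  have hq0 : (0:ℝ) ≤ q := by rw [hqdef]; linarith
  have hq1 : q ≤ 1 := by rw [hqdef]; linarith
  have hr0 : (0:ℝ) ≤ r := by rw [hrdef]; linarith
  have hnp : (n:ℝ) * p ≤ 1 := by
    rw [hpdef, mul_one_div, div_le_one hM0]; exact hnM
  have hnp0 : 0 ≤ (n:ℝ) * p := by positivity
  have hMp : M * p = 1 := by rw [hpdef]; field_simp
  have hqM : q * M = M - 1 := by rw [hqdef, hpdef]; field_simp
  have hrM : r * M = M - 2 := by rw [hrdef, hpdef]; field_simp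
  -- the indicator functions
  set R : Fin m → (Fin n → Fin m) → ℝ :=
    fun j z => if cnt j z ≤ 1 then 1 else 0 with hRdef
  set F : (Fin n → Fin m) → ℝ := fun z => ∑ j, R j z with hFdef
  have hFval : ∀ z, F z = ((univ.filter (fun j : Fin m => cnt j z ≤ 1)).card : ℝ) := by
    intro z
    rw [hFdef]
    simp only [hRdef]
    rw [Finset.card_filter]
    push_cast
    rfl
  -- cast of counting lemmas
  have hcast1 : ∀ j : Fin m, ∑ z : Fin n → Fin m, R j z
      = (M - 1)^(e+2) + n * (M - 1)^(e+1) := by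
    intro j
    have : ∑ z : Fin n → Fin m, R j z
        = ((univ.filter (fun z : Fin n → Fin m => cnt j z ≤ 1)).card : ℝ) := by
      rw [Finset.card_filter]; push_cast; simp [hRdef]
    rw [this, card_S1 j]
    have hm1 : ((m - 1 : ℕ) : ℝ) = M - 1 := by
      have : (1:ℕ) ≤ m := by omega
      push_cast [this]; ring
    push_cast [hm1]
    norm_num
    rfl
  have hcast2 : ∀ j k : Fin m, j ≠ k → ∑ z : Fin n → Fin m, R j z * R k z
      ≤ (M - 2)^(e+2) + 2 * n * (M - 2)^(e+1) + n^2 * (M - 2)^e := by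
    intro j k hjk
    have h1 : ∑ z : Fin n → Fin m, R j z * R k z
        = ((univ.filter (fun z : Fin n → Fin m => cnt j z ≤ 1 ∧ cnt k z ≤ 1)).card : ℝ) := by
      rw [Finset.card_filter]; push_cast
      apply Finset.sum_congr rfl
      intro z _
      by_cases h1 : cnt j z ≤ 1 <;> by_cases h2 : cnt k z ≤ 1 <;> simp [hRdef, h1, h2]
    rw [h1]
    have h2 := card_S2 (n := n) j k hjk
    have hm2 : ((m - 2 : ℕ) : ℝ) = M - 2 := by
      have : (2:ℕ) ≤ m := by omega
      push_cast [this]; ring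
    have h3 : (((m - 2) ^ n + n * (m - 2) ^ (n - 1)
        + n * ((m - 2) ^ (n - 1) + n * (m - 2) ^ (n - 1 - 1)) : ℕ) : ℝ)
        = (M - 2)^(e+2) + 2 * n * (M - 2)^(e+1) + n^2 * (M - 2)^e := by
      have e1 : n - 1 = e + 1 := rfl
      have e2 : n - 1 - 1 = e := rfl
      have e3 : n = e + 2 := rfl
      push_cast [e1, e2, e3, hm2]
      push_cast
      ring
    rw [← h3]
    exact_mod_cast h2
  -- B and A
  set B : ℝ := q^(e+2) + n * p * q^(e+1) with hBdef
  set A : ℝ := r^(e+2) + 2 * n * p * r^(e+1) + n^2 * p^2 * r^e with hAdef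
  set N : ℝ := M^(e+2) with hNdef
  have hN0 : 0 < N := by positivity
  have hq_pow : ∀ k : ℕ, q^k * M^k = (M-1)^k := by
    intro k; rw [← mul_pow, hqM]
  have hr_pow : ∀ k : ℕ, r^k * M^k = (M-2)^k := by
    intro k; rw [← mul_pow, hrM]
  have hS1B : (M - 1)^(e+2) + n * (M - 1)^(e+1) = B * N := by
    rw [hBdef, hNdef, ← hq_pow (e+2), ← hq_pow (e+1)]
    have : M^(e+2) = M^(e+1) * M := by ring
    rw [this]
    have : (n:ℝ) * (q ^ (e + 1) * M ^ (e + 1)) = n * p * q^(e+1) * (M^(e+1) * M) := by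
      rw [mul_comm (n * p) _]
      have : (n:ℝ) * p * (M^(e+1) * M) = n * (M * p) * M^(e+1) := by ring
      rw [mul_assoc (q^(e+1))]
      rw [this, hMp]
      ring
    rw [this]
    ring
  have hS2A : (M - 2)^(e+2) + 2 * n * (M - 2)^(e+1) + n^2 * (M - 2)^e = A * N := by
    rw [hAdef, hNdef, ← hr_pow (e+2), ← hr_pow (e+1), ← hr_pow e]
    have hpM : p * M = 1 := by rw [mul_comm]; exact hMp
    have expand : (r ^ (e + 2) + 2 * (n:ℝ) * p * r ^ (e + 1) + (n:ℝ) ^ 2 * p ^ 2 * r ^ e) * M ^ (e + 2)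
        = r^(e+2)*M^(e+2) + 2*(n:ℝ)*(r^(e+1)*M^(e+1))*(p*M)
          + (n:ℝ)^2*(r^e*M^e)*((p*M)*(p*M)) := by ring
    rw [expand, hpM]; ring
  -- sums
  have hSf : ∑ z : Fin n → Fin m, F z = M * (B * N) := by
    rw [hFdef]
    rw [Finset.sum_comm]
    rw [Finset.sum_congr rfl (fun j _ => hcast1 j)]
    rw [Finset.sum_const, Finset.card_univ, Fintype.card_fin, nsmul_eq_mul, hS1B, hMdef]
  have hRsq : ∀ j z, R j z * R j z = R j z := by
    intro j z
    by_cases h : cnt j z ≤ 1 <;> simp [hRdef, h]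
  have hA0 : 0 ≤ A := by
    rw [hAdef]; positivity
  have hSff : ∑ z : Fin n → Fin m, (F z)^2 ≤ M * (B * N) + M^2 * (A * N) := by
    have expand : ∑ z : Fin n → Fin m, (F z)^2
        = ∑ j : Fin m, ∑ z : Fin n → Fin m, ∑ k : Fin m, R j z * R k z := by
      rw [Finset.sum_comm]
      apply Finset.sum_congr rfl
      intro z _
      rw [hFdef, sq, Finset.sum_mul_sum]
    rw [expand]
    have step : ∀ j : Fin m, ∑ z : Fin n → Fin m, ∑ k : Fin m, R j z * R k z
        ≤ B * N + M * (A * N) := by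
      intro j
      rw [Finset.sum_comm]
      rw [← Finset.add_sum_erase _ _ (Finset.mem_univ j)]
      have h1 : ∑ z : Fin n → Fin m, R j z * R j z = B * N := by
        rw [Finset.sum_congr rfl (fun z _ => hRsq j z), hcast1 j, hS1B]
      have h2 : ∑ k ∈ univ.erase j, ∑ z : Fin n → Fin m, R j z * R k z
          ≤ ((univ.erase j).card : ℝ) * (A * N) := by
        rw [← nsmul_eq_mul]
        apply Finset.sum_le_card_nsmul
        intro k hk
        have hjk : j ≠ k := fun h => (Finset.mem_erase.1 hk).1 h.symm
        calc ∑ z : Fin n → Fin m, R j z * R k z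
            ≤ (M - 2)^(e+2) + 2 * n * (M - 2)^(e+1) + n^2 * (M - 2)^e := hcast2 j k hjk
          _ = A * N := hS2A
      have h3 : ((univ.erase j).card : ℝ) ≤ M := by
        rw [hMdef]
        exact_mod_cast (Finset.card_erase_of_mem (Finset.mem_univ j)).le.trans
          (by rw [Finset.card_univ, Fintype.card_fin]; omega)
      have h4 : ((univ.erase j).card : ℝ) * (A * N) ≤ M * (A * N) := by
        apply mul_le_mul_of_nonneg_right h3 (by positivity)
      linarith
    calc ∑ j : Fin m, ∑ z : Fin n → Fin m, ∑ k : Fin m, R j z * R k z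
        ≤ ∑ _j : Fin m, (B * N + M * (A * N)) := Finset.sum_le_sum (fun j _ => step j)
      _ = M * (B * N + M * (A * N)) := by
          rw [Finset.sum_const, Finset.card_univ, Fintype.card_fin, nsmul_eq_mul, hMdef]
      _ = M * (B * N) + M^2 * (A * N) := by ring
  -- variance bound
  have hnu2 : ν < 2 := by
    have := mul_pos (by linarith : (0:ℝ) < ν + 1) (Real.exp_pos (-1/ν))
    linarith
  have hM2n : M ≤ 2 * n := by
    have : (ν - ε) * n ≤ 2 * n :=
      mul_le_mul_of_nonneg_right (by linarith) hnR0.le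
    linarith
  have hrq2 : r ≤ q^2 := by rw [hrdef, hqdef]; nlinarith [sq_nonneg p]
  set u : ℝ := q^e with hudef
  have hu0 : 0 ≤ u := by positivity
  have hu1 : u ≤ 1 := pow_le_one₀ hq0 hq1
  have hqe2 : q^(e+2) = u * q^2 := by rw [hudef]; ring
  have hqe1 : q^(e+1) = u * q := by rw [hudef]; ring
  have hrpow : ∀ k : ℕ, r^k ≤ (q^k)^2 := by
    intro k
    calc r^k ≤ (q^2)^k := pow_le_pow_left₀ hr0 hrq2 k
      _ = (q^k)^2 := by rw [← pow_mul, ← pow_mul, mul_comm]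
  have hAB : A - B^2 ≤ 4 * n * p^2 := by
    have h1 := hrpow (e+2)
    have h2 := hrpow (e+1)
    have h3 := hrpow e
    rw [hqe2] at h1
    rw [hqe1] at h2
    have hBval : B = u * q * (q + n * p) := by rw [hBdef, hqe2, hqe1]; ring
    have hAle : A ≤ u^2 * (q^2 + n*p)^2 := by
      rw [hAdef]
      have t1 : r^(e+2) ≤ u^2 * q^4 := by
        calc r^(e+2) ≤ (q^(e+2))^2 := hrpow (e+2)
          _ = u^2 * q^4 := by rw [hqe2]; ring
      have t2 : r^(e+1) ≤ u^2 * q^2 := by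
        calc r^(e+1) ≤ (q^(e+1))^2 := hrpow (e+1)
          _ = u^2 * q^2 := by rw [hqe1]; ring
      have t3 : r^e ≤ u^2 := by
        calc r^e ≤ (q^e)^2 := hrpow e
          _ = u^2 := by rw [hudef]
      have t2' : 2 * (n:ℝ) * p * r^(e+1) ≤ 2 * n * p * (u^2 * q^2) :=
        mul_le_mul_of_nonneg_left t2 (by positivity)
      have t3' : (n:ℝ)^2 * p^2 * r^e ≤ n^2 * p^2 * u^2 :=
        mul_le_mul_of_nonneg_left t3 (by positivity)
      have expand : u^2 * q^4 + 2 * (n:ℝ) * p * (u^2 * q^2) + n^2 * p^2 * u^2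
          = u^2 * (q^2 + n*p)^2 := by ring
      linarith
    have key : u^2 * (q^2 + n*p)^2 - (u * q * (q + n * p))^2
        = u^2 * ((n:ℝ)*p) * p * (2*q^2 + (n*p) + (n*p)*q) := by ring
    have hfin : u^2 * ((n:ℝ)*p) * p * (2*q^2 + (n*p) + (n*p)*q) ≤ 4 * n * p^2 := by
      have hq2le : q^2 ≤ 1 := pow_le_one₀ hq0 hq1
      have hu2le : u^2 ≤ 1 := pow_le_one₀ hu0 hu1
      have c1 : 2*q^2 + ((n:ℝ)*p) + (n*p)*q ≤ 4 := by
        have : ((n:ℝ)*p)*q ≤ ((n:ℝ)*p)*1 := mul_le_mul_of_nonneg_left hq1 hnp0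
        linarith
      have c2 : u^2 * ((n:ℝ)*p) * p ≤ n * p^2 := by
        have d1 : u^2 * ((n:ℝ)*p) ≤ 1 * ((n:ℝ)*p) := mul_le_mul_of_nonneg_right hu2le hnp0
        have d2 : u^2 * ((n:ℝ)*p) * p ≤ 1 * ((n:ℝ)*p) * p :=
          mul_le_mul_of_nonneg_right d1 hp0.le
        calc u^2 * ((n:ℝ)*p) * p ≤ 1 * ((n:ℝ)*p) * p := d2
          _ = n * p^2 := by ring
      have c0 : 0 ≤ u^2 * ((n:ℝ)*p) * p :=
        mul_nonneg (mul_nonneg (sq_nonneg u) hnp0) hp0.le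
      calc u^2 * ((n:ℝ)*p) * p * (2*q^2 + (n*p) + (n*p)*q)
          ≤ u^2 * ((n:ℝ)*p) * p * 4 := mul_le_mul_of_nonneg_left c1 c0
        _ = (u^2 * ((n:ℝ)*p) * p) * 4 := by ring
        _ ≤ (n * p^2) * 4 := by linarith
        _ = 4 * n * p^2 := by ring
    calc A - B^2 = A - (u*q*(q+n*p))^2 := by rw [hBval]
      _ ≤ u^2 * (q^2 + n*p)^2 - (u*q*(q+n*p))^2 := by linarith
      _ = u^2 * ((n:ℝ)*p) * p * (2*q^2 + (n*p) + (n*p)*q) := key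
      _ ≤ 4 * n * p^2 := hfin
  have hMB : M * B ≤ 3 * n := by
    have h1 : q^(e+2) ≤ 1 := pow_le_one₀ hq0 hq1
    have h2 : q^(e+1) ≤ 1 := pow_le_one₀ hq0 hq1
    have : M * B = M * q^(e+2) + n * q^(e+1) := by
      rw [hBdef]
      have : M * ((n:ℝ) * p * q^(e+1)) = (n:ℝ) * q^(e+1) * (M * p) := by ring
      rw [mul_add, this, hMp]
      ring
    rw [this]
    have e1 : M * q^(e+2) ≤ M := by
      calc M * q^(e+2) ≤ M * 1 := mul_le_mul_of_nonneg_left (pow_le_one₀ hq0 hq1) hM0.le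
        _ = M := mul_one M
    have e2 : (n:ℝ) * q^(e+1) ≤ n := by
      calc (n:ℝ) * q^(e+1) ≤ (n:ℝ) * 1 :=
            mul_le_mul_of_nonneg_left (pow_le_one₀ hq0 hq1) hnR0.le
        _ = n := mul_one _
    linarith
  have hvar : M * (B * N) + M^2 * (A * N) - M^2 * B^2 * N ≤ 7 * n * N := by
    have hM2AB : M^2 * (A - B^2) ≤ 4 * n := by
      have hMp2 : M^2 * p^2 = 1 := by
        have : (M*p)^2 = 1 := by rw [hMp]; norm_num
        calc M^2 * p^2 = (M*p)^2 := by ring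
          _ = 1 := this
      calc M^2 * (A - B^2) ≤ M^2 * (4 * n * p^2) := by
            apply mul_le_mul_of_nonneg_left hAB (by positivity)
        _ = 4 * n * (M^2 * p^2) := by ring
        _ = 4 * n := by rw [hMp2]; ring
    have c0 : M * (B * N) ≤ 3 * n * N := by
      calc M * (B * N) = (M * B) * N := by ring
        _ ≤ (3 * n) * N := mul_le_mul_of_nonneg_right hMB hN0.le
        _ = 3 * n * N := by ring
    have c1 : M^2 * (A * N) - M^2 * B^2 * N ≤ 4 * n * N := by
      calc M^2 * (A * N) - M^2 * B^2 * N = (M^2 * (A - B^2)) * N := by ring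
        _ ≤ (4 * n) * N := mul_le_mul_of_nonneg_right hM2AB hN0.le
        _ = 4 * n * N := by ring
    linarith
  -- mean bound
  set mu : ℝ := M * B with hmudef
  have hmean : mu ≤ (2 - ν) * n + 2 := by
    have hexp1 : q ≤ Real.exp (-p) := by
      have := Real.add_one_le_exp (-p)
      rw [hqdef]; linarith
    have hexpnn : 0 ≤ Real.exp (-p) := (Real.exp_pos _).le
    have hpow2 : q^(e+2) ≤ Real.exp (-((n:ℝ) * p)) := by
      calc q^(e+2) ≤ (Real.exp (-p))^(e+2) := pow_le_pow_left₀ hq0 hexp1 _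
        _ = Real.exp (((e+2 : ℕ) : ℝ) * (-p)) := by rw [← Real.exp_nat_mul]
        _ = Real.exp (-((n:ℝ) * p)) := by congr 1; rw [hn]; push_cast; ring
    have hpow1 : q^(e+1) ≤ Real.exp (-((n:ℝ) * p)) * Real.exp p := by
      calc q^(e+1) ≤ (Real.exp (-p))^(e+1) := pow_le_pow_left₀ hq0 hexp1 _
        _ = Real.exp (((e+1 : ℕ) : ℝ) * (-p)) := by rw [← Real.exp_nat_mul]
        _ = Real.exp (-((n:ℝ) * p)) * Real.exp p := by
            rw [← Real.exp_add]; congr 1; rw [hn]; push_cast; ring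
    have hexpp : Real.exp p ≤ 1 + 2 * p := by
      have h1 : 1 - p ≤ Real.exp (-p) := by
        have := Real.add_one_le_exp (-p); linarith
      have h2 : 0 < 1 - p := by linarith
      have h3 : Real.exp p * Real.exp (-p) = 1 := by
        rw [← Real.exp_add]; norm_num
      have h4 : Real.exp p * (1 - p) ≤ 1 := by
        calc Real.exp p * (1-p) ≤ Real.exp p * Real.exp (-p) :=
              mul_le_mul_of_nonneg_left h1 (Real.exp_pos p).le
          _ = 1 := h3
      have h5 : (1:ℝ) ≤ (1+2*p)*(1-p) := by
        have h6 : 0 ≤ p*(1-2*p) := mul_nonneg hp0.le (by linarith)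
        have h7 : (1+2*p)*(1-p) = 1 + p*(1-2*p) := by ring
        linarith
      exact le_of_mul_le_mul_right (by linarith) h2
    have hmuval : mu = M * q^(e+2) + n * q^(e+1) := by
      rw [hmudef, hBdef]
      have : M * ((n:ℝ) * p * q^(e+1)) = (n:ℝ) * q^(e+1) * (M * p) := by ring
      rw [mul_add, this, hMp]
      ring
    have hEnp : Real.exp (-((n:ℝ) * p)) ≤ Real.exp (-(1/ν)) := by
      apply Real.exp_le_exp.2
      have hM_nu : M ≤ ν * n := by
        linarith [mul_nonneg hε0.le hnR0.le]
      have : 1/ν ≤ (n:ℝ) * p := by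
        rw [hpdef, mul_one_div, div_le_div_iff₀ hν hM0]
        linarith
      linarith
    have hexp_le_one : Real.exp (-((n:ℝ) * p)) ≤ 1 := by
      apply Real.exp_le_one_iff.2; linarith
    have hkey2 : (ν + 1) * Real.exp (-(1/ν)) = 2 - ν := by
      have : (-1/ν : ℝ) = -(1/ν) := by ring
      rw [← this]; linarith
    have hEnn : 0 ≤ Real.exp (-((n:ℝ)*p)) := (Real.exp_pos _).le
    have step1 : M * q^(e+2) ≤ M * Real.exp (-((n:ℝ)*p)) :=
      mul_le_mul_of_nonneg_left hpow2 hM0.le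
    have step2 : (n:ℝ) * q^(e+1) ≤ n * (Real.exp (-((n:ℝ)*p)) * (1 + 2*p)) := by
      have h4 : q^(e+1) ≤ Real.exp (-((n:ℝ) * p)) * (1 + 2*p) := by
        calc q^(e+1) ≤ Real.exp (-((n:ℝ) * p)) * Real.exp p := hpow1
          _ ≤ Real.exp (-((n:ℝ) * p)) * (1 + 2*p) := by
              apply mul_le_mul_of_nonneg_left hexpp hEnn
      exact mul_le_mul_of_nonneg_left h4 hnR0.le
    have step3 : M * Real.exp (-((n:ℝ)*p)) + (n:ℝ) * (Real.exp (-((n:ℝ)*p)) * (1 + 2*p))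
        = (M + n) * Real.exp (-((n:ℝ)*p)) + 2 * ((n:ℝ)*p) * Real.exp (-((n:ℝ)*p)) := by
      ring
    have step4 : (M + (n:ℝ)) * Real.exp (-((n:ℝ)*p)) ≤ (M + n) * Real.exp (-(1/ν)) := by
      apply mul_le_mul_of_nonneg_left hEnp (by linarith)
    have step5 : (M + (n:ℝ)) * Real.exp (-(1/ν)) ≤ (ν + 1) * n * Real.exp (-(1/ν)) := by
      apply mul_le_mul_of_nonneg_right _ (Real.exp_pos _).le
      linarith [mul_nonneg hε0.le hnR0.le]
    have step6 : 2 * ((n:ℝ)*p) * Real.exp (-((n:ℝ)*p)) ≤ 2 := by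
      have : ((n:ℝ)*p) * Real.exp (-((n:ℝ)*p)) ≤ 1 := by
        calc ((n:ℝ)*p) * Real.exp (-((n:ℝ)*p)) ≤ 1 * 1 :=
              mul_le_mul hnp hexp_le_one hEnn (by norm_num)
          _ = 1 := by norm_num
      linarith
    have heq : (ν + 1) * (n:ℝ) * Real.exp (-(1/ν)) = (2 - ν) * n := by
      rw [mul_assoc, mul_comm (n:ℝ) _, ← mul_assoc, hkey2]
    linarith [hmuval, step1, step2, step3, step4, step5, step6]
  -- threshold
  set Bad : Finset (Fin n → Fin m) := univ.filter (fun z : Fin n → Fin m =>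
      (repeatCount z : ℤ) ≤ 2 * ((m:ℤ) - (n:ℤ))) with hBadDef
  have hthresh : ∀ z ∈ Bad, 2 * (n:ℝ) - M ≤ F z := by
    intro z hz
    rw [hBadDef, Finset.mem_filter] at hz
    have hU := U_add_repeat z
    have hZ : (2 * (n:ℤ) - m : ℤ) ≤ ((univ.filter (fun j : Fin m => cnt j z ≤ 1)).card : ℤ) := by
      omega
    rw [hFval z, hMdef]
    exact_mod_cast hZ
  have htgap : ε * n / 2 ≤ 2 * (n:ℝ) - M - mu := by
    have h1 : (ν - ε) * n + (2 - ν) * n = 2 * (n:ℝ) - ε * n := by ring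
    linarith
  have htpos : 0 < ε * n / 2 := by positivity
  -- Chebyshev
  have hNcard : ((Finset.univ : Finset (Fin n → Fin m)).card : ℝ) = N := by
    rw [Finset.card_univ, hNdef, hMdef]
    rw [Fintype.card_fun]
    push_cast
    norm_num
    rfl
  have hvarsum : ∑ z : Fin n → Fin m, (F z - mu)^2 ≤ 7 * n * N := by
    have expand : ∑ z : Fin n → Fin m, (F z - mu)^2
        = ∑ z : Fin n → Fin m, (F z)^2 - 2 * mu * (∑ z : Fin n → Fin m, F z)
          + ((Finset.univ : Finset (Fin n → Fin m)).card : ℝ) * mu^2 := by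
      rw [Finset.sum_congr rfl (fun z _ => by ring :
        ∀ z ∈ (Finset.univ : Finset (Fin n → Fin m)),
          (F z - mu)^2 = (F z)^2 - 2 * mu * F z + mu^2)]
      rw [Finset.sum_add_distrib, Finset.sum_sub_distrib, ← Finset.mul_sum,
        Finset.sum_const, nsmul_eq_mul]
    rw [expand, hSf, hNcard]
    have : M * (B * N) + M^2 * (A * N) - 2 * mu * (M * (B * N)) + N * mu^2
        = M * (B * N) + M^2 * (A * N) - M^2 * B^2 * N := by
      rw [hmudef]; ring
    linarith [hSff, hvar, this]
  have hcheb : (Bad.card : ℝ) * (ε * n / 2)^2 ≤ 7 * n * N := by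
    have h1 : ∀ z ∈ Bad, (ε * n / 2)^2 ≤ (F z - mu)^2 := by
      intro z hz
      have h2 := hthresh z hz
      have h3 : ε * n / 2 ≤ F z - mu := by linarith
      exact pow_le_pow_left₀ htpos.le h3 2
    calc (Bad.card : ℝ) * (ε * n / 2)^2 = ∑ _z ∈ Bad, (ε * n / 2)^2 := by
          rw [Finset.sum_const, nsmul_eq_mul]
      _ ≤ ∑ z ∈ Bad, (F z - mu)^2 := Finset.sum_le_sum h1
      _ ≤ ∑ z : Fin n → Fin m, (F z - mu)^2 :=
          Finset.sum_le_sum_of_subset_of_nonneg (Finset.subset_univ _)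
            (fun z _ _ => sq_nonneg _)
      _ ≤ 7 * n * N := hvarsum
  -- conclude
  have hfinal : (Bad.card : ℝ) ≤ 28 / ε^2 / n * N := by
    have hq2 : (0:ℝ) < (ε * n / 2)^2 := by positivity
    have h1 : (Bad.card : ℝ) ≤ 7 * n * N / (ε * n / 2)^2 := by
      rw [le_div_iff₀ hq2]
      exact hcheb
    have h2 : 7 * (n:ℝ) * N / (ε * n / 2)^2 = 28 / ε^2 / n * N := by
      field_simp
      ring
    linarith [h1, h2.le, h2.ge]
  rw [hNdef, hMdef] at hfinal
  exact hfinal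

lemma meas_event {n m : ℕ} {Ω : Type} [MeasurableSpace Ω] (P : Measure Ω)
    (Z : Fin n → Ω → Fin m) (hZm : ∀ i, Measurable (Z i))
    (hind : iIndepFun Z P)
    (hunif : ∀ (i : Fin n) (j : Fin m), P {ω | Z i ω = j} = ((m : ENNReal))⁻¹)
    (pred : (Fin n → Fin m) → Prop) [DecidablePred pred] :
    P {ω | pred (fun i => Z i ω)} =
      ((univ.filter pred).card : ENNReal) * (((m : ENNReal))⁻¹)^n := by
  classical
  have hsingle : ∀ z : Fin n → Fin m,
      P {ω | (fun i => Z i ω) = z} = (((m : ENNReal))⁻¹)^n := by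
    intro z
    have hset : {ω | (fun i => Z i ω) = z} = ⋂ i, Z i ⁻¹' {z i} := by
      ext ω
      simp [funext_iff, Set.mem_iInter]
    rw [hset, hind.meas_iInter (fun i => ⟨{z i}, MeasurableSet.of_discrete, rfl⟩)]
    have : ∀ i, P (Z i ⁻¹' {z i}) = ((m : ENNReal))⁻¹ := by
      intro i
      have : Z i ⁻¹' {z i} = {ω | Z i ω = z i} := by
        ext ω; simp
      rw [this, hunif i (z i)]
    rw [Finset.prod_congr rfl (fun i _ => this i), Finset.prod_const,
      Finset.card_univ, Fintype.card_fin]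
  have hdecomp : {ω | pred (fun i => Z i ω)}
      = ⋃ z ∈ (univ.filter pred : Finset (Fin n → Fin m)),
          {ω | (fun i => Z i ω) = z} := by
    ext ω
    simp only [Set.mem_setOf_eq, Set.mem_iUnion, Finset.mem_filter, Finset.mem_univ,
      true_and, Set.mem_setOf_eq]
    constructor
    · intro h
      exact ⟨fun i => Z i ω, h, rfl⟩
    · rintro ⟨z, hz, hzz⟩
      rw [hzz]; exact hz
  rw [hdecomp, measure_biUnion_finset]
  · rw [Finset.sum_congr rfl (fun z _ => hsingle z), Finset.sum_const, nsmul_eq_mul]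
  · intro z hz z' hz' hne
    simp only [Function.onFun]
    rw [Set.disjoint_left]
    intro ω h1 h2
    simp only [Set.mem_setOf_eq] at h1 h2
    exact hne (h1 ▸ h2 ▸ rfl)
  · intro z _
    have : {ω | (fun i => Z i ω) = z} = ⋂ i, Z i ⁻¹' {z i} := by
      ext ω; simp [funext_iff, Set.mem_iInter]
    rw [this]
    exact MeasurableSet.iInter (fun i => hZm i (MeasurableSet.of_discrete))

end Aux

/-- Let `ν` be the positive root of `ν(1 + (1 + 1/ν)e^{-1/ν}) = 2` and `ε ∈ (0, ν)`.
There are constants `C > 0` and `N₀` (depending only on `ε`) such that for all `n ≥ N₀`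
and `m ≤ (ν - ε) n`, if `Z 1, ..., Z n` are i.i.d. uniform on a set of `m` elements, then
the probability that the number of repeated values is at most `2(m - n)` is at most `C/n`. -/
theorem repeatCount_small_prob (ν : ℝ) (hν : 0 < ν)
    (hνeq : ν * (1 + (1 + 1 / ν) * Real.exp (-1 / ν)) = 2)
    (ε : ℝ) (hε0 : 0 < ε) (hεν : ε < ν) :
    ∃ C : ℝ, 0 < C ∧ ∃ N₀ : ℕ, ∀ n : ℕ, N₀ ≤ n → ∀ m : ℕ, (m : ℝ) ≤ (ν - ε) * n →
      ∀ (Ω : Type) (_ : MeasurableSpace Ω) (P : Measure Ω), IsProbabilityMeasure P →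
      ∀ (Z : Fin n → Ω → Fin m), (∀ i, Measurable (Z i)) →
      iIndepFun Z P →
      (∀ (i : Fin n) (j : Fin m), P {ω | Z i ω = j} = ((m : ENNReal))⁻¹) →
      P {ω | (repeatCount (fun i => Z i ω) : ℤ) ≤ 2 * ((m : ℤ) - (n : ℤ))} ≤
        ENNReal.ofReal (C / n) := by
  classical
  have hkey : ν + (ν + 1) * Real.exp (-1/ν) = 2 := by
    have h1 : ν * (1 + (1 + 1/ν) * Real.exp (-1/ν))
        = ν + (ν * (1 + 1/ν)) * Real.exp (-1/ν) := by ring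
    have h2 : ν * (1 + 1/ν) = ν + 1 := by field_simp
    rw [h1, h2] at hνeq
    exact hνeq
  refine ⟨28 / ε^2, by positivity, ⌈(4:ℝ)/ε⌉₊ + 2, ?_⟩
  intro n hn m hm Ω _ P hP Z hZm hind hunif
  have hn2 : 2 ≤ n := by omega
  have hεn : 4 ≤ ε * n := by
    have h1 : (4:ℝ)/ε ≤ (⌈(4:ℝ)/ε⌉₊ : ℝ) := Nat.le_ceil _
    have h2 : ((⌈(4:ℝ)/ε⌉₊ : ℕ) : ℝ) ≤ (n : ℝ) := by exact_mod_cast le_trans (by omega) hn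
    have h3 : (4:ℝ)/ε ≤ (n:ℝ) := le_trans h1 h2
    rw [div_le_iff₀ hε0] at h3
    linarith
  by_cases hnm : n ≤ m
  · -- probabilistic case
    have hm0 : (0:ℝ) < (m:ℝ) := by
      have : 0 < m := by omega
      exact_mod_cast this
    have main := main_count ν ε hν hkey hε0 n m hn2 hnm hm hεn
    have hev := meas_event P Z hZm hind hunif
      (fun z => (repeatCount z : ℤ) ≤ 2 * ((m:ℤ) - (n:ℤ)))
    have hsetEq : {ω | (repeatCount (fun i => Z i ω) : ℤ) ≤ 2 * ((m : ℤ) - (n : ℤ))}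
        = {ω | (fun z => (repeatCount z : ℤ) ≤ 2 * ((m:ℤ) - (n:ℤ))) (fun i => Z i ω)} := rfl
    rw [hsetEq, hev]
    have h1 : ENNReal.ofReal ((((Finset.univ.filter (fun z : Fin n → Fin m =>
          (repeatCount z : ℤ) ≤ 2 * ((m:ℤ) - (n:ℤ)))).card : ℝ)) * (((m:ℝ))⁻¹)^n)
        = (((Finset.univ.filter (fun z : Fin n → Fin m =>
          (repeatCount z : ℤ) ≤ 2 * ((m:ℤ) - (n:ℤ)))).card : ENNReal)) * (((m : ENNReal))⁻¹)^n := by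
      rw [ENNReal.ofReal_mul (Nat.cast_nonneg _), ENNReal.ofReal_natCast,
        ENNReal.ofReal_pow (by positivity : (0:ℝ) ≤ ((m:ℝ))⁻¹),
        ENNReal.ofReal_inv_of_pos hm0, ENNReal.ofReal_natCast]
    rw [← h1]
    apply ENNReal.ofReal_le_ofReal
    have hMn : (0:ℝ) < (m:ℝ)^n := by positivity
    have h2 : (((Finset.univ.filter (fun z : Fin n → Fin m =>
          (repeatCount z : ℤ) ≤ 2 * ((m:ℤ) - (n:ℤ)))).card : ℝ)) * (((m:ℝ))⁻¹)^n
        ≤ (28 / ε^2 / n * (m:ℝ)^n) * (((m:ℝ))⁻¹)^n := by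
      apply mul_le_mul_of_nonneg_right main (by positivity)
    calc (((Finset.univ.filter (fun z : Fin n → Fin m =>
          (repeatCount z : ℤ) ≤ 2 * ((m:ℤ) - (n:ℤ)))).card : ℝ)) * (((m:ℝ))⁻¹)^n
        ≤ (28 / ε^2 / n * (m:ℝ)^n) * (((m:ℝ))⁻¹)^n := h2
      _ = 28 / ε^2 / n * ((m:ℝ)^n * ((m:ℝ)^n)⁻¹) := by rw [inv_pow]; ring
      _ = 28 / ε^2 / n := by rw [mul_inv_cancel₀ hMn.ne', mul_one]
  · -- deterministic case : the event is empty
    have hmn : m < n := not_le.1 hnm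
    have hev : {ω : Ω | (repeatCount (fun i => Z i ω) : ℤ) ≤ 2 * ((m : ℤ) - (n : ℤ))} = ∅ := by
      ext ω
      simp only [Set.mem_setOf_eq, Set.mem_empty_iff_false, iff_false, not_le]
      have h0 : (0:ℤ) ≤ (repeatCount (fun i => Z i ω) : ℤ) := Int.natCast_nonneg _
      omega
    rw [hev]
    simp
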